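/- Let G = (V,E) be an undirected graph with an optimizer set S achieving the weighted vertex expansion: 0 < π(S) ≤ 1/2 and π(∂S)/π(S) = ψ. Then the one-dimensional program γ⁽¹⁾(G) — minimizing Σ_v π(v)g(v) over f: V → ℝ, g: V → ℝ≥0 subject to Σ_v π(v)f(v)² = 1, Σ_v π(v)f(v) = 0, and g(u)+g(v) ≥ (f(u)−f(v))² for all uv ∈ E — has value at most 2ψ. -/

import Mathlib

open Finset

/-- Easy direction of Cheeger's inequality for weighted vertex expansion: if `S` is an
optimizer with `0 < π(S) ≤ 1/2` and vertex expansion `ψ = π(∂S)/π(S)`, then the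
one-dimensional dual program `γ⁽¹⁾(G)` has a feasible solution of value at most `2ψ`. -/
theorem stmt_9 {V : Type*} [Fintype V] [DecidableEq V]
    (E : V → V → Prop) [DecidableRel E] (hsymm : Symmetric E)
    (π : V → ℝ) (hπ : ∀ v, 0 ≤ π v) (hπ1 : ∑ v, π v = 1)
    (S : Finset V) (hS0 : 0 < ∑ v ∈ S, π v) (hS2 : ∑ v ∈ S, π v ≤ 1 / 2) :
    ∃ (f g : V → ℝ),
      (∀ v, 0 ≤ g v) ∧
      (∑ v, π v * f v ^ 2 = 1) ∧
      (∑ v, π v * f v = 0) ∧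
      (∀ u v, E u v → (f u - f v) ^ 2 ≤ g u + g v) ∧
      ∑ v, π v * g v ≤
        2 * ((∑ v ∈ (Finset.univ \ S).filter (fun v => ∃ u, u ∈ S ∧ E u v), π v) /
          (∑ v ∈ S, π v)) := by
  classical
  obtain ⟨p, hp_def⟩ : ∃ p, p = ∑ v ∈ S, π v := ⟨_, rfl⟩
  obtain ⟨q, hq_def⟩ : ∃ q, q = 1 - p := ⟨_, rfl⟩
  have hp : 0 < p := hp_def ▸ hS0
  have hS2' : p ≤ 1 / 2 := hp_def ▸ hS2
  have hq : 0 < q := by rw [hq_def]; linarith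
  have hq2 : (1:ℝ)/2 ≤ q := by rw [hq_def]; linarith
  have hpq1 : p + q = 1 := by rw [hq_def]; ring
  have hqc : ∑ v ∈ Sᶜ, π v = q := by
    have h := Finset.sum_add_sum_compl S π
    rw [hπ1] at h
    rw [hq_def, hp_def]; linarith
  obtain ⟨a, ha_def⟩ : ∃ a, a = Real.sqrt (q / p) := ⟨_, rfl⟩
  obtain ⟨b, hb_def⟩ : ∃ b, b = Real.sqrt (p / q) := ⟨_, rfl⟩
  have ha0 : 0 ≤ a := ha_def ▸ Real.sqrt_nonneg _
  have hb0 : 0 ≤ b := hb_def ▸ Real.sqrt_nonneg _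
  have ha2 : a ^ 2 = q / p := by rw [ha_def]; exact Real.sq_sqrt (by positivity)
  have hb2 : b ^ 2 = p / q := by rw [hb_def]; exact Real.sq_sqrt (by positivity)
  have hab : a * b = 1 := by
    rw [ha_def, hb_def, ← Real.sqrt_mul (by positivity)]
    rw [show q / p * (p / q) = 1 by field_simp]
    exact Real.sqrt_one
  have hpa : p * a = q * b := by
    have h1 : (p * a) ^ 2 = p * q := by rw [mul_pow, ha2]; field_simp
    have h2 : (q * b) ^ 2 = p * q := by rw [mul_pow, hb2]; field_simp
    have e1 : p * a = Real.sqrt ((p * a) ^ 2) := (Real.sqrt_sq (by positivity)).symm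
    have e2 : q * b = Real.sqrt ((q * b) ^ 2) := (Real.sqrt_sq (by positivity)).symm
    rw [e1, e2, h1, h2]
  obtain ⟨B, hB_def⟩ :
      ∃ B : Finset V, B = (Finset.univ \ S).filter (fun v => ∃ u, u ∈ S ∧ E u v) := ⟨_, rfl⟩
  refine ⟨fun v => if v ∈ S then a else -b, fun v => if v ∈ B then 1 / (p * q) else 0,
    ?_, ?_, ?_, ?_, ?_⟩
  · intro v; dsimp only; split <;> positivity
  · rw [← Finset.sum_add_sum_compl S]
    have h1 : ∑ v ∈ S, π v * (if v ∈ S then a else -b) ^ 2 = (∑ v ∈ S, π v) * (q / p) := by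
      rw [Finset.sum_mul]
      exact Finset.sum_congr rfl fun v hv => by rw [if_pos hv, ha2]
    have h2 : ∑ v ∈ Sᶜ, π v * (if v ∈ S then a else -b) ^ 2 = (∑ v ∈ Sᶜ, π v) * (p / q) := by
      rw [Finset.sum_mul]
      refine Finset.sum_congr rfl fun v hv => ?_
      rw [if_neg (Finset.mem_compl.mp hv), neg_pow, hb2]; ring
    rw [h1, h2, ← hp_def, hqc]
    field_simp
    linarith
  · rw [← Finset.sum_add_sum_compl S]
    have h1 : ∑ v ∈ S, π v * (if v ∈ S then a else -b) = (∑ v ∈ S, π v) * a := by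
      rw [Finset.sum_mul]
      exact Finset.sum_congr rfl fun v hv => by rw [if_pos hv]
    have h2 : ∑ v ∈ Sᶜ, π v * (if v ∈ S then a else -b) = (∑ v ∈ Sᶜ, π v) * (-b) := by
      rw [Finset.sum_mul]
      exact Finset.sum_congr rfl fun v hv => by rw [if_neg (Finset.mem_compl.mp hv)]
    rw [h1, h2, ← hp_def, hqc]
    rw [show p * a + q * -b = p * a - q * b by ring, hpa]; ring
  · intro u v huv
    have key : (a + b) ^ 2 = 1 / (p * q) := by
      have : (a + b) ^ 2 = a ^ 2 + 2 * (a * b) + b ^ 2 := by ring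
      rw [this, ha2, hb2, hab]
      field_simp
      nlinarith
    by_cases hu : u ∈ S <;> by_cases hv : v ∈ S <;>
      simp only [hu, hv, if_true, if_false]
    · simp only [sub_self, ne_eq, OfNat.ofNat_ne_zero, not_false_eq_true, zero_pow]
      have h1 : (0:ℝ) ≤ if u ∈ B then 1 / (p * q) else 0 := by split <;> positivity
      have h2 : (0:ℝ) ≤ if v ∈ B then 1 / (p * q) else 0 := by split <;> positivity
      linarith
    · have hvB : v ∈ B := by
        rw [hB_def, Finset.mem_filter]
        exact ⟨by simp [hv], u, hu, huv⟩
      rw [if_pos hvB]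
      have h1 : (0:ℝ) ≤ if u ∈ B then 1 / (p * q) else 0 := by split <;> positivity
      have heq : (a - -b) ^ 2 = 1 / (p * q) := by rw [← key]; ring_nf
      linarith [heq.le]
    · have huB : u ∈ B := by
        rw [hB_def, Finset.mem_filter]
        exact ⟨by simp [hu], v, hv, hsymm huv⟩
      rw [if_pos huB]
      have h2 : (0:ℝ) ≤ if v ∈ B then 1 / (p * q) else 0 := by split <;> positivity
      have heq : (-b - a) ^ 2 = 1 / (p * q) := by rw [← key]; ring_nf
      linarith [heq.le]
    · simp only [sub_self, ne_eq, OfNat.ofNat_ne_zero, not_false_eq_true, zero_pow]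
      have h1 : (0:ℝ) ≤ if u ∈ B then 1 / (p * q) else 0 := by split <;> positivity
      have h2 : (0:ℝ) ≤ if v ∈ B then 1 / (p * q) else 0 := by split <;> positivity
      linarith
  · have hsum : ∑ v, π v * (if v ∈ B then 1 / (p * q) else 0)
        = (∑ v ∈ B, π v) * (1 / (p * q)) := by
      rw [Finset.sum_mul]
      rw [← Finset.sum_filter_add_sum_filter_not Finset.univ (· ∈ B)
        (fun v => π v * (if v ∈ B then 1 / (p * q) else 0))]
      have e1 : Finset.univ.filter (· ∈ B) = B := by ext x; simp
      have e2 : ∑ v ∈ Finset.univ.filter (· ∉ B), π v * (if v ∈ B then 1 / (p * q) else 0)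
          = 0 := by
        refine Finset.sum_eq_zero fun v hv => ?_
        rw [if_neg (Finset.mem_filter.mp hv).2, mul_zero]
      rw [e1, e2, add_zero]
      exact Finset.sum_congr rfl fun v hv => by rw [if_pos hv]
    rw [hsum, ← hB_def, ← hp_def]
    have hBnn : 0 ≤ ∑ v ∈ B, π v := Finset.sum_nonneg fun v _ => hπ v
    have h1 : 1 / (p * q) ≤ 2 / p := by
      rw [div_le_div_iff₀ (by positivity) hp]
      nlinarith
    calc (∑ v ∈ B, π v) * (1 / (p * q)) ≤ (∑ v ∈ B, π v) * (2 / p) :=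
          mul_le_mul_of_nonneg_left h1 hBnn
      _ = 2 * ((∑ v ∈ B, π v) / p) := by ring
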